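/- Let κ ≥ 5 and let p/q be an irreducible fraction with 0 < p/q < 1 whose Farey path w = s_1 s_2 … s_n has length n ≥ κ − 2. Then m(κ, p/q) = 0 if and only if s_{κ−3} = s_{κ−2}, i.e. the degree κ is absent from the reduced degree sequence of G_{p/q} exactly when the path has a symbol repetition (LL or RR) at position κ − 2. -/

import Mathlib

/-- Symbols for paths in the Farey binary tree. -/
inductive LR
  | L
  | R
deriving DecidableEq

/-- One step in the Farey binary tree: update the current pair of fractions
(represented as pairs (numerator, denominator) of naturals). -/
def fareyStep : ((ℕ × ℕ) × (ℕ × ℕ)) → LR → ((ℕ × ℕ) × (ℕ × ℕ))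
  | ((a, b), (c, d)), LR.L => ((a, b), (a + c, b + d))
  | ((a, b), (c, d)), LR.R => ((a + c, b + d), (c, d))

/-- The final pair of fractions of a word: after reading the first symbol `L`
the current pair is (0/1, 1/1); the remaining symbols update it. -/
def finalPair (w : List LR) : (ℕ × ℕ) × (ℕ × ℕ) :=
  w.tail.foldl fareyStep ((0, 1), (1, 1))

/-- The value ⟨w⟩ of a word: the mediant of its final pair, as (numerator, denominator). -/
def value (w : List LR) : ℕ × ℕ :=
  ((finalPair w).1.1 + (finalPair w).2.1, (finalPair w).1.2 + (finalPair w).2.2)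

/-- A word over {L,R} is a Farey word when its first symbol is `L`. -/
def IsFareyWord (w : List LR) : Prop := w.head? = some LR.L

/-- Concatenation of degree sequences:
[a₁,…,a_s] ⊕ [b₁,…,b_t] = [a₁+1, a₂, …, a_{s−1}, a_s+b₁, b₂, …, b_{t−1}, b_t+1]. -/
def oplus (A B : List ℕ) : List ℕ :=
  (A.dropLast.modifyHead (· + 1)) ++ [A.getLastD 0 + B.headD 0] ++ B.tail.dropLast
    ++ [B.getLastD 0 + 1]

/-- Update of the pair (D(left ancestor), D(right ancestor)) of unreduced degree
sequences along one symbol. -/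
def degStep : (List ℕ × List ℕ) → LR → (List ℕ × List ℕ)
  | (A, B), LR.L => (A, oplus A B)
  | (A, B), LR.R => (oplus A B, B)

/-- The pair (D(a/b), D(c/d)) of unreduced degree sequences of the final pair of a word;
0/1 and 1/1 are both assigned the list [1,1]. -/
def degPair (w : List LR) : List ℕ × List ℕ :=
  w.tail.foldl degStep ([1, 1], [1, 1])

/-- The unreduced degree sequence D(⟨w⟩) = D(a/b) ⊕ D(c/d) of the value of a word. -/
def Dseq (w : List LR) : List ℕ :=
  oplus (degPair w).1 (degPair w).2

/-- Reduction: [k₁,…,k_{q+1}] becomes [k₂,…,k_q, k₁+k_{q+1}]; the last entry is the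
boundary degree and the remaining ones are the inner degrees. -/
def reduce (D : List ℕ) : List ℕ :=
  D.tail.dropLast ++ [D.headD 0 + D.getLastD 0]

/-- The reduced degree sequence of the Haros graph G_{⟨w⟩}. -/
def degSeq (w : List LR) : List ℕ := reduce (Dseq w)

/-- Degree-distribution entropy S of the Haros graph G_{⟨w⟩}:
S = −Σ_k P(k)·ln P(k), summed over the degree values occurring in the reduced
degree sequence, where P(k) = m(k)/q. -/
noncomputable def Sent (w : List LR) : ℝ :=
  -∑ k ∈ (degSeq w).toFinset,
    (((degSeq w).count k : ℝ) / ((value w).2 : ℝ)) *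
      Real.log (((degSeq w).count k : ℝ) / ((value w).2 : ℝ))

/-- Reduced entropy H of the Haros graph G_{⟨w⟩} (with the convention 0·ln 0 = 0,
automatic since Real.log 0 = 0). -/
noncomputable def Hent (w : List LR) : ℝ :=
  let x : ℝ := ((value w).1 : ℝ) / ((value w).2 : ℝ)
  if x ≤ 1 / 2 then
    Sent w + 2 * x * Real.log x + (1 - 2 * x) * Real.log (1 - 2 * x)
  else
    Sent w + 2 * (1 - x) * Real.log (1 - x) + (2 * x - 1) * Real.log (2 * x - 1)


namespace Statement3Aux

/-- State: endpoints and interiors of the pair of unreduced degree sequences. -/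
structure St where
  a0 : ℕ
  aI : List ℕ
  aN : ℕ
  b0 : ℕ
  bI : List ℕ
  bN : ℕ

def St.A (s : St) : List ℕ := s.a0 :: (s.aI ++ [s.aN])
def St.B (s : St) : List ℕ := s.b0 :: (s.bI ++ [s.bN])

def step : St → LR → St
  | s, LR.L => ⟨s.a0, s.aI, s.aN, s.a0 + 1, s.aI ++ (s.aN + s.b0) :: s.bI, s.bN + 1⟩
  | s, LR.R => ⟨s.a0 + 1, s.aI ++ (s.aN + s.b0) :: s.bI, s.bN + 1, s.b0, s.bI, s.bN⟩

def init : St := ⟨1, [], 1, 1, [], 1⟩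

def mid (s : St) : List ℕ := s.aI ++ (s.aN + s.b0) :: s.bI

lemma oplus_eq (s : St) :
    oplus s.A s.B = (s.a0 + 1) :: (mid s ++ [s.bN + 1]) := by
  unfold oplus St.A St.B mid
  have h1 : (s.a0 :: (s.aI ++ [s.aN])).dropLast = s.a0 :: s.aI := by
    have : s.a0 :: (s.aI ++ [s.aN]) = (s.a0 :: s.aI) ++ [s.aN] := by simp
    rw [this, List.dropLast_concat]
  have h2 : (s.a0 :: (s.aI ++ [s.aN])).getLastD 0 = s.aN := by
    rw [List.getLastD_cons]; simp
  have h3 : (s.b0 :: (s.bI ++ [s.bN])).getLastD 0 = s.bN := by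
    rw [List.getLastD_cons]; simp
  rw [h1, h2, h3]
  simp [List.dropLast_concat]

lemma degStep_eq (s : St) (x : LR) :
    degStep (s.A, s.B) x = ((step s x).A, (step s x).B) := by
  cases x <;> simp only [degStep, step, oplus_eq] <;>
    simp [St.A, St.B, mid]

lemma degPair_eq (t : List LR) :
    degPair (LR.L :: t) = ((t.foldl step init).A, (t.foldl step init).B) := by
  induction t using List.reverseRecOn with
  | nil => rfl
  | append_singleton t x ih =>
      have : degPair (LR.L :: (t ++ [x])) = degStep (degPair (LR.L :: t)) x := by
        simp [degPair]
      rw [this, ih, degStep_eq, List.foldl_append]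
      rfl

/-- The full invariant carried along the word. -/
def Inv (t : List LR) (s : St) : Prop :=
  s.a0 + s.bN = t.length + 2 ∧
  ((∀ j : ℕ, t[j]? ≠ some LR.R) ∧ s.a0 + s.aN = 2 ∨
    ∃ j, t[j]? = some LR.R ∧ (∀ k, j < k → t[k]? ≠ some LR.R) ∧ s.a0 + s.aN = j + 4) ∧
  ((∀ j : ℕ, t[j]? ≠ some LR.L) ∧ s.b0 + s.bN = 2 ∨
    ∃ j, t[j]? = some LR.L ∧ (∀ k, j < k → t[k]? ≠ some LR.L) ∧ s.b0 + s.bN = j + 4) ∧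
  (∀ κ, 5 ≤ κ →
    (κ ∈ mid s ↔ ∃ j, j + 1 < t.length ∧ t[j]? ≠ t[j + 1]? ∧ κ = j + 5))

lemma getElem?_concat_lt (t : List LR) (x : LR) {n : ℕ} (h : n < t.length) :
    (t ++ [x])[n]? = t[n]? := by
  rw [List.getElem?_append, if_pos h]

lemma getElem?_concat_len (t : List LR) (x : LR) :
    (t ++ [x])[t.length]? = some x := by simp

lemma getElem?_concat_gt (t : List LR) (x : LR) {n : ℕ} (h : t.length < n) :
    (t ++ [x])[n]? = none := by
  apply List.getElem?_eq_none
  simpa using h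

lemma some_of_lt {t : List LR} {j : ℕ} (h : j < t.length) : t[j]? = some t[j] :=
  List.getElem?_eq_getElem h

lemma get_L_of_ne_R {t : List LR} {j : ℕ} (hj : j < t.length) (h : t[j]? ≠ some LR.R) :
    t[j]? = some LR.L := by
  rw [some_of_lt hj] at h ⊢
  cases hv : t[j] <;> simp_all

lemma get_R_of_ne_L {t : List LR} {j : ℕ} (hj : j < t.length) (h : t[j]? ≠ some LR.L) :
    t[j]? = some LR.R := by
  rw [some_of_lt hj] at h ⊢
  cases hv : t[j] <;> simp_all

/-- Membership in the concatenated mid after a step: the RHS ∃-characterization. -/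
lemma exists_concat_iff (t : List LR) (x : LR) (κ : ℕ) :
    (∃ j, j + 1 < (t ++ [x]).length ∧ (t ++ [x])[j]? ≠ (t ++ [x])[j + 1]? ∧ κ = j + 5) ↔
    ((∃ j, j + 1 < t.length ∧ t[j]? ≠ t[j + 1]? ∧ κ = j + 5) ∨
      (0 < t.length ∧ t[t.length - 1]? ≠ some x ∧ κ = t.length + 4)) := by
  constructor
  · rintro ⟨j, hj, hne, hk⟩
    simp only [List.length_append, List.length_singleton] at hj
    rcases lt_or_eq_of_le (Nat.lt_succ_iff.mp hj) with h | h
    · left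
      refine ⟨j, h, ?_, hk⟩
      rwa [getElem?_concat_lt t x (by omega), getElem?_concat_lt t x h] at hne
    · right
      refine ⟨by omega, ?_, by omega⟩
      have hj1 : j = t.length - 1 := by omega
      have hjlt : j < t.length := by omega
      rw [getElem?_concat_lt t x hjlt] at hne
      have : j + 1 = t.length := by omega
      rw [this, getElem?_concat_len] at hne
      rwa [← hj1]
  · rintro (⟨j, hj, hne, hk⟩ | ⟨hpos, hne, hk⟩)
    · refine ⟨j, by simp; omega, ?_, hk⟩
      rwa [getElem?_concat_lt t x (by omega), getElem?_concat_lt t x hj]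
    · refine ⟨t.length - 1, by simp; omega, ?_, by omega⟩
      have h1 : t.length - 1 + 1 = t.length := by omega
      rw [getElem?_concat_lt t x (by omega), h1, getElem?_concat_len]
      exact hne

lemma inv_step {t : List LR} {s : St} (h : Inv t s) (x : LR) :
    Inv (t ++ [x]) (step s x) := by
  obtain ⟨h1, h4, h5, h3⟩ := h
  cases x with
  | L =>
    refine ⟨by simp [step]; omega, ?_, ?_, ?_⟩
    · -- I4: a0 + aN unchanged, no new R
      rcases h4 with ⟨hno, hs⟩ | ⟨j, hjR, hafter, hs⟩
      · left
        refine ⟨?_, by simpa [step] using hs⟩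
        intro j
        rcases lt_trichotomy j t.length with hj | hj | hj
        · rw [getElem?_concat_lt t _ hj]; exact hno j
        · rw [hj, getElem?_concat_len]; simp
        · rw [getElem?_concat_gt t _ hj]; simp
      · right
        have hjlt : j < t.length := by
          by_contra hc
          rw [List.getElem?_eq_none (by omega)] at hjR; cases hjR
        refine ⟨j, by rw [getElem?_concat_lt t _ hjlt]; exact hjR, ?_,
          by simpa [step] using hs⟩
        intro k hk
        rcases lt_trichotomy k t.length with hk2 | hk2 | hk2
        · rw [getElem?_concat_lt t _ hk2]; exact hafter k hk
        · rw [hk2, getElem?_concat_len]; simp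
        · rw [getElem?_concat_gt t _ hk2]; simp
    · -- I5: new last L at position t.length
      right
      refine ⟨t.length, getElem?_concat_len t _, ?_, ?_⟩
      · intro k hk; rw [getElem?_concat_gt t _ hk]; simp
      · simp only [step]; omega
    · -- I3
      intro κ hκ
      have hmid : mid (step s LR.L) = s.aI ++ (s.aN + (s.a0 + 1)) :: mid s := by
        simp [mid, step]
      rw [hmid, exists_concat_iff]
      have hsub : κ ∈ s.aI → κ ∈ mid s := fun h => by simp [mid, h]
      have hmem : κ ∈ s.aI ++ (s.aN + (s.a0 + 1)) :: mid s ↔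
          κ = s.a0 + s.aN + 1 ∨ κ ∈ mid s := by
        simp only [List.mem_append, List.mem_cons]
        constructor
        · rintro (h | h | h)
          · exact Or.inr (hsub h)
          · left; omega
          · exact Or.inr h
        · rintro (h | h)
          · right; left; omega
          · right; right; exact h
      rw [hmem, h3 κ hκ]
      rcases h4 with ⟨hno, hs⟩ | ⟨j, hjR, hafter, hs⟩
      · -- no R in t: a0+aN+1 = 3 ≠ κ; last symbol (if any) is L
        constructor
        · rintro (h | h)
          · omega
          · exact Or.inl h
        · rintro (h | ⟨hpos, hne, _⟩)
          · exact Or.inr h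
          · exact absurd (get_L_of_ne_R (by omega) (hno (t.length - 1))) hne
      · have hjlt : j < t.length := by
          by_contra hc
          rw [List.getElem?_eq_none (by omega)] at hjR; cases hjR
        rcases lt_or_eq_of_le (Nat.succ_le_of_lt hjlt) with hj1 | hj1
        · -- j+1 < t.length : old pair at j, last symbol is L
          have hL : t[j + 1]? = some LR.L :=
            get_L_of_ne_R hj1 (hafter (j + 1) (by omega))
          have hold : κ = s.a0 + s.aN + 1 →
              (∃ i, i + 1 < t.length ∧ t[i]? ≠ t[i + 1]? ∧ κ = i + 5) := by
            intro hk
            exact ⟨j, hj1, by rw [hjR, hL]; simp, by omega⟩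
          have hlast : t[t.length - 1]? = some LR.L :=
            get_L_of_ne_R (by omega) (hafter (t.length - 1) (by omega))
          constructor
          · rintro (h | h)
            · exact Or.inl (hold h)
            · exact Or.inl h
          · rintro (h | ⟨_, hne, _⟩)
            · exact Or.inr h
            · exact absurd hlast (by simpa using hne)
        · -- j = t.length - 1 : new pair, value = t.length + 4
          constructor
          · rintro (h | h)
            · right
              refine ⟨by omega, ?_, by omega⟩
              have he : t.length - 1 = j := by omega
              rw [he, hjR]; simp
            · exact Or.inl h
          · rintro (h | ⟨_, _, hk⟩)
            · exact Or.inr h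
            · left; omega
  | R =>
    refine ⟨by simp [step]; omega, ?_, ?_, ?_⟩
    · -- I4: new last R at position t.length
      right
      refine ⟨t.length, getElem?_concat_len t _, ?_, ?_⟩
      · intro k hk; rw [getElem?_concat_gt t _ hk]; simp
      · simp only [step]; omega
    · -- I5: b0 + bN unchanged, no new L
      rcases h5 with ⟨hno, hs⟩ | ⟨j, hjL, hafter, hs⟩
      · left
        refine ⟨?_, by simpa [step] using hs⟩
        intro j
        rcases lt_trichotomy j t.length with hj | hj | hj
        · rw [getElem?_concat_lt t _ hj]; exact hno j
        · rw [hj, getElem?_concat_len]; simp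
        · rw [getElem?_concat_gt t _ hj]; simp
      · right
        have hjlt : j < t.length := by
          by_contra hc
          rw [List.getElem?_eq_none (by omega)] at hjL; cases hjL
        refine ⟨j, by rw [getElem?_concat_lt t _ hjlt]; exact hjL, ?_,
          by simpa [step] using hs⟩
        intro k hk
        rcases lt_trichotomy k t.length with hk2 | hk2 | hk2
        · rw [getElem?_concat_lt t _ hk2]; exact hafter k hk
        · rw [hk2, getElem?_concat_len]; simp
        · rw [getElem?_concat_gt t _ hk2]; simp
    · -- I3
      intro κ hκ
      have hmid : mid (step s LR.R) =
          mid s ++ (s.bN + 1 + s.b0) :: s.bI := by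
        simp [mid, step]
      rw [hmid, exists_concat_iff]
      have hsub : κ ∈ s.bI → κ ∈ mid s := fun h => by simp [mid, h]
      have hmem : κ ∈ mid s ++ (s.bN + 1 + s.b0) :: s.bI ↔
          κ = s.b0 + s.bN + 1 ∨ κ ∈ mid s := by
        simp only [List.mem_append, List.mem_cons]
        constructor
        · rintro (h | h | h)
          · exact Or.inr h
          · left; omega
          · exact Or.inr (hsub h)
        · rintro (h | h)
          · right; left; omega
          · left; exact h
      rw [hmem, h3 κ hκ]
      rcases h5 with ⟨hno, hs⟩ | ⟨j, hjL, hafter, hs⟩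
      · constructor
        · rintro (h | h)
          · omega
          · exact Or.inl h
        · rintro (h | ⟨hpos, hne, _⟩)
          · exact Or.inr h
          · exact absurd (get_R_of_ne_L (by omega) (hno (t.length - 1))) hne
      · have hjlt : j < t.length := by
          by_contra hc
          rw [List.getElem?_eq_none (by omega)] at hjL; cases hjL
        rcases lt_or_eq_of_le (Nat.succ_le_of_lt hjlt) with hj1 | hj1
        · have hR : t[j + 1]? = some LR.R :=
            get_R_of_ne_L hj1 (hafter (j + 1) (by omega))
          have hold : κ = s.b0 + s.bN + 1 →
              (∃ i, i + 1 < t.length ∧ t[i]? ≠ t[i + 1]? ∧ κ = i + 5) := by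
            intro hk
            exact ⟨j, hj1, by rw [hjL, hR]; simp, by omega⟩
          have hlast : t[t.length - 1]? = some LR.R :=
            get_R_of_ne_L (by omega) (hafter (t.length - 1) (by omega))
          constructor
          · rintro (h | h)
            · exact Or.inl (hold h)
            · exact Or.inl h
          · rintro (h | ⟨_, hne, _⟩)
            · exact Or.inr h
            · exact absurd hlast (by simpa using hne)
        · constructor
          · rintro (h | h)
            · right
              refine ⟨by omega, ?_, by omega⟩
              have he : t.length - 1 = j := by omega
              rw [he, hjL]; simp
            · exact Or.inl h
          · rintro (h | ⟨_, _, hk⟩)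
            · exact Or.inr h
            · left; omega

lemma inv_foldl (t : List LR) : Inv t (t.foldl step init) := by
  induction t using List.reverseRecOn with
  | nil =>
      refine ⟨rfl, Or.inl ⟨by simp, rfl⟩, Or.inl ⟨by simp, rfl⟩, ?_⟩
      intro κ hκ
      constructor
      · intro h
        simp [mid, init] at h
        omega
      · rintro ⟨j, hj, _⟩
        simp at hj
  | append_singleton t x ih =>
      rw [List.foldl_append]
      exact inv_step ih x

lemma degSeq_eq (t : List LR) :
    degSeq (LR.L :: t) =
      mid (t.foldl step init) ++ [(t.foldl step init).a0 + (t.foldl step init).bN + 2] := by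
  set s := t.foldl step init with hs
  have hD : Dseq (LR.L :: t) = (s.a0 + 1) :: (mid s ++ [s.bN + 1]) := by
    unfold Dseq
    rw [degPair_eq]
    exact oplus_eq s
  unfold degSeq reduce
  rw [hD]
  have h1 : ((s.a0 + 1) :: (mid s ++ [s.bN + 1])).tail = mid s ++ [s.bN + 1] := rfl
  have h2 : (mid s ++ [s.bN + 1]).dropLast = mid s := List.dropLast_concat ..
  have h3 : ((s.a0 + 1) :: (mid s ++ [s.bN + 1])).getLastD 0 = s.bN + 1 := by
    rw [List.getLastD_cons]; simp
  rw [h1, h2, h3]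
  simp only [List.headD_cons]
  have : s.a0 + 1 + (s.bN + 1) = s.a0 + s.bN + 2 := by omega
  rw [this]

end Statement3Aux

/-- for κ ≥ 5 and a Farey path w = s₁s₂…s_n of length n ≥ κ − 2 with value
the irreducible fraction p/q ∈ (0,1), the degree κ is absent from the reduced degree
sequence of G_{p/q} exactly when s_{κ−3} = s_{κ−2} (a symbol repetition LL or RR at
position κ − 2). Indices are 1-based in the informal statement, 0-based via `getElem?`. -/
theorem statement3 (κ : ℕ) (hκ : 5 ≤ κ) (p q : ℕ) (hcop : Nat.Coprime p q)
    (hp : 0 < p) (hpq : p < q) (w : List LR) (hw : IsFareyWord w)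
    (hn : κ - 2 ≤ w.length) (hval : value w = (p, q)) :
    (degSeq w).count κ = 0 ↔ w[κ - 4]? = w[κ - 3]? := by
  classical
  obtain ⟨t, rfl⟩ : ∃ t, w = LR.L :: t := by
    cases w with
    | nil => simp [IsFareyWord] at hw
    | cons a t =>
        simp [IsFareyWord] at hw
        exact ⟨t, by rw [hw]⟩
  set s := t.foldl Statement3Aux.step Statement3Aux.init with hsdef
  obtain ⟨h1, _, _, h3⟩ := Statement3Aux.inv_foldl t
  rw [← hsdef] at h1 h3
  have hn' : κ - 2 ≤ t.length + 1 := by simpa using hn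
  clear hn
  have hκle : κ ≤ t.length + 3 := by omega
  rw [Statement3Aux.degSeq_eq, ← hsdef, List.count_eq_zero]
  have hb : κ ≠ s.a0 + s.bN + 2 := by omega
  have hmem : κ ∈ Statement3Aux.mid s ++ [s.a0 + s.bN + 2] ↔ κ ∈ Statement3Aux.mid s := by
    simp only [List.mem_append, List.mem_singleton]
    constructor
    · rintro (h | h)
      · exact h
      · exact absurd h hb
    · exact Or.inl
  rw [hmem, h3 κ hκ]
  have hlt : κ - 4 < t.length := by omega
  have hidx : ∀ P : ℕ → Prop, (∃ j, j + 1 < t.length ∧ t[j]? ≠ t[j+1]? ∧ κ = j + 5) ↔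
      (t[κ - 5]? ≠ t[κ - 4]?) := by
    intro _
    constructor
    · rintro ⟨j, hj, hne, hk⟩
      have hj5 : j = κ - 5 := by omega
      have hj4 : j + 1 = κ - 4 := by omega
      rw [hj4, hj5] at hne
      exact hne
    · intro hne
      refine ⟨κ - 5, by omega, ?_, by omega⟩
      have hj4 : κ - 5 + 1 = κ - 4 := by omega
      rw [hj4]
      exact hne
  rw [hidx (fun _ => True)]
  have hw4 : (LR.L :: t)[κ - 4]? = t[κ - 5]? := by
    have : κ - 4 = (κ - 5) + 1 := by omega
    rw [this, List.getElem?_cons_succ]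
  have hw3 : (LR.L :: t)[κ - 3]? = t[κ - 4]? := by
    have : κ - 3 = (κ - 4) + 1 := by omega
    rw [this, List.getElem?_cons_succ]
  rw [hw4, hw3]
  exact not_not
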